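/- For every integer N ≥ 1, the following identity of polynomials in q holds: ∑_{n=1}^{N} (−1)^{N−n} q^{N + n + nN + binom(N−n+1,2)} [N−1 choose n−1]_q = (−1)^{N+1} q^{binom(N+2,2)} ∏_{j=2}^{N}(1 − q^{j}), where binom(a,2) = a(a−1)/2. -/

import Mathlib

set_option maxHeartbeats 1000000
set_option synthInstance.maxHeartbeats 400000

open Polynomial

/-- The q-Pochhammer symbol `(q;q)_n = ∏_{j=0}^{n-1} (1 - q^{j+1})` as a polynomial in `ℤ[q]`. -/
noncomputable def qPoch (n : ℕ) : Polynomial ℤ :=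
  ∏ j ∈ Finset.range n, (1 - X ^ (j + 1))

/-- The Gaussian (q-)binomial coefficient `[A choose B]_q`, viewed in the fraction field
of `ℤ[q]`: it equals `(q;q)_A / ((q;q)_B (q;q)_{A-B})` for `B ≤ A`, and `0` otherwise. -/
noncomputable def qBinom (A B : ℕ) : FractionRing (Polynomial ℤ) :=
  if B ≤ A then
    algebraMap (Polynomial ℤ) (FractionRing (Polynomial ℤ)) (qPoch A) /
      (algebraMap (Polynomial ℤ) (FractionRing (Polynomial ℤ)) (qPoch B) *
        algebraMap (Polynomial ℤ) (FractionRing (Polynomial ℤ)) (qPoch (A - B)))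
  else 0

local notation "F" => FractionRing (Polynomial ℤ)
local notation "φ" => algebraMap (Polynomial ℤ) F

lemma qPoch_zero : qPoch 0 = 1 := by unfold qPoch; exact Finset.prod_range_zero _

lemma qPoch_succ (n : ℕ) : qPoch (n + 1) = qPoch n * (1 - X ^ (n + 1)) :=
  Finset.prod_range_succ _ _

lemma qPoch_ne_zero (n : ℕ) : qPoch n ≠ 0 := by
  unfold qPoch
  refine Finset.prod_ne_zero_iff.2 fun j _ h => ?_
  have := congrArg (Polynomial.eval (0 : ℤ)) h
  simp at this

lemma phi_qPoch_ne_zero (n : ℕ) : φ (qPoch n) ≠ 0 := by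
  exact (map_ne_zero_iff _ (IsFractionRing.injective (Polynomial ℤ) F)).2 (qPoch_ne_zero n)

lemma qBinom_zero_right (A : ℕ) : qBinom A 0 = 1 := by
  unfold qBinom
  rw [if_pos (Nat.zero_le A), qPoch_zero, map_one, one_mul, Nat.sub_zero,
    div_self (phi_qPoch_ne_zero A)]

lemma qBinom_self (A : ℕ) : qBinom A A = 1 := by
  unfold qBinom
  rw [if_pos le_rfl, Nat.sub_self, qPoch_zero, map_one, mul_one,
    div_self (phi_qPoch_ne_zero A)]

lemma qBinom_of_gt {A B : ℕ} (h : A < B) : qBinom A B = 0 := by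
  unfold qBinom; rw [if_neg (by omega)]

lemma qBinom_symm {A B : ℕ} (h : B ≤ A) : qBinom A (A - B) = qBinom A B := by
  unfold qBinom
  rw [if_pos (by omega), if_pos h, Nat.sub_sub_self h, mul_comm]

/-- Pascal recurrence: `[M+1 choose k+1] = [M choose k+1] + q^(M-k) [M choose k]`. -/
lemma qBinom_pascal (M k : ℕ) :
    qBinom (M + 1) (k + 1) = qBinom M (k + 1) + φ (X ^ (M - k)) * qBinom M k := by
  rcases le_or_gt (k + 1) M with hk | hk
  · -- main case: k + 1 ≤ M
    obtain ⟨c, rfl⟩ : ∃ c, M = k + 1 + c := ⟨M - (k + 1), by omega⟩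
    unfold qBinom
    rw [if_pos (by omega), if_pos (by omega), if_pos (by omega)]
    have e1 : k + 1 + c + 1 - (k + 1) = c + 1 := by omega
    have e2 : k + 1 + c - (k + 1) = c := by omega
    have e3 : k + 1 + c - k = c + 1 := by omega
    rw [e1, e2, e3]
    rw [show qPoch (k + 1 + c + 1) = qPoch (k + 1 + c) * (1 - X ^ (k + 1 + c + 1)) from
        qPoch_succ _,
      show qPoch (c + 1) = qPoch c * (1 - X ^ (c + 1)) from qPoch_succ _,
      show qPoch (k + 1) = qPoch k * (1 - X ^ (k + 1)) from qPoch_succ _]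
    have h1 : (1 : F) - (algebraMap (Polynomial ℤ) F X) ^ (k + 1) ≠ 0 := by
      have : φ (1 - X ^ (k + 1)) ≠ 0 := by
        rw [map_ne_zero_iff _ (IsFractionRing.injective (Polynomial ℤ) F)]
        intro h; have := congrArg (Polynomial.eval (0 : ℤ)) h; simp at this
      simpa [map_sub, map_pow] using this
    have h2 : (1 : F) - (algebraMap (Polynomial ℤ) F X) ^ (c + 1) ≠ 0 := by
      have : φ (1 - X ^ (c + 1)) ≠ 0 := by
        rw [map_ne_zero_iff _ (IsFractionRing.injective (Polynomial ℤ) F)]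
        intro h; have := congrArg (Polynomial.eval (0 : ℤ)) h; simp at this
      simpa [map_sub, map_pow] using this
    have hPk := phi_qPoch_ne_zero k
    have hPc := phi_qPoch_ne_zero c
    simp only [map_mul, map_sub, map_one, map_pow]
    field_simp
    ring
  · -- k ≥ M
    rcases Nat.lt_or_ge M k with hk2 | hk2
    · rw [qBinom_of_gt (by omega), qBinom_of_gt (by omega), qBinom_of_gt hk2]
      ring
    · have hkM : k = M := by omega
      subst hkM
      rw [qBinom_self, qBinom_of_gt (by omega), Nat.sub_self, pow_zero, map_one,
        qBinom_self]
      ring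

/-- Tailored q-binomial theorem:
`∑_{j=0}^{M} (-1)^j q^(C(j,2)+(M-j)t) [M choose j] = ∏_{i<M} (q^t - q^i)`. -/
lemma qbinom_theorem (t : ℕ) : ∀ M : ℕ,
    ∑ j ∈ Finset.range (M + 1),
      (-1 : F) ^ j * φ (X ^ (j.choose 2 + (M - j) * t)) * qBinom M j
      = ∏ i ∈ Finset.range M, (φ (X ^ t) - φ (X ^ i)) := by
  intro M
  induction M with
  | zero => simp [qBinom_zero_right]
  | succ M ih =>
    have key : ∑ j ∈ Finset.range (M + 2),
        (-1 : F) ^ j * φ (X ^ (j.choose 2 + (M + 1 - j) * t)) * qBinom (M + 1) j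
        = (φ (X ^ t) - φ (X ^ M)) *
          ∑ j ∈ Finset.range (M + 1),
            (-1 : F) ^ j * φ (X ^ (j.choose 2 + (M - j) * t)) * qBinom M j := by
      rw [Finset.sum_range_succ' (fun j => (-1 : F) ^ j *
        φ (X ^ (j.choose 2 + (M + 1 - j) * t)) * qBinom (M + 1) j) (M + 1)]
      have step : ∀ k ∈ Finset.range (M + 1),
          (-1 : F) ^ (k + 1) * φ (X ^ ((k + 1).choose 2 + (M + 1 - (k + 1)) * t)) *
              qBinom (M + 1) (k + 1)
          = (-1 : F) ^ (k + 1) * φ (X ^ ((k + 1).choose 2 + (M - k) * t)) *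
              qBinom M (k + 1)
            - φ (X ^ M) *
              ((-1 : F) ^ k * φ (X ^ (k.choose 2 + (M - k) * t)) * qBinom M k) := by
        intro k hk
        have hkM : k ≤ M := by simpa [Nat.lt_succ_iff] using Finset.mem_range.1 hk
        rw [show M + 1 - (k + 1) = M - k by omega, qBinom_pascal M k]
        have hch : (k + 1).choose 2 = k + k.choose 2 := by
          rw [Nat.choose_succ_succ, Nat.choose_one_right]
        have hexp : (k + 1).choose 2 + (M - k) * t + (M - k) =
            k.choose 2 + (M - k) * t + M := by
          rw [hch]
          generalize (M - k) * t = P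
          generalize k.choose 2 = C
          omega
        have hφ : φ (X ^ ((k + 1).choose 2 + (M - k) * t)) * φ (X ^ (M - k))
            = φ (X ^ (k.choose 2 + (M - k) * t)) * φ (X ^ M) := by
          rw [← map_mul, ← map_mul, ← pow_add, ← pow_add, hexp]
        calc (-1 : F) ^ (k + 1) * φ (X ^ ((k + 1).choose 2 + (M - k) * t)) *
              (qBinom M (k + 1) + φ (X ^ (M - k)) * qBinom M k)
            = (-1 : F) ^ (k + 1) * φ (X ^ ((k + 1).choose 2 + (M - k) * t)) *
                qBinom M (k + 1)
              + (-1 : F) ^ (k + 1) *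
                (φ (X ^ ((k + 1).choose 2 + (M - k) * t)) * φ (X ^ (M - k))) *
                qBinom M k := by ring
          _ = _ := by rw [hφ, pow_succ]; ring
      rw [Finset.sum_congr rfl step, Finset.sum_sub_distrib]
      have first : (∑ k ∈ Finset.range (M + 1),
          (-1 : F) ^ (k + 1) * φ (X ^ ((k + 1).choose 2 + (M - k) * t)) *
            qBinom M (k + 1))
          + (-1 : F) ^ 0 * φ (X ^ (Nat.choose 0 2 + (M + 1 - 0) * t)) *
              qBinom (M + 1) 0
          = φ (X ^ t) * ∑ j ∈ Finset.range (M + 1),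
              (-1 : F) ^ j * φ (X ^ (j.choose 2 + (M - j) * t)) * qBinom M j := by
        rw [Finset.sum_range_succ, qBinom_of_gt (Nat.lt_succ_self M), mul_zero, add_zero]
        rw [Finset.mul_sum, Finset.sum_range_succ' (fun j => φ (X ^ t) *
          ((-1 : F) ^ j * φ (X ^ (j.choose 2 + (M - j) * t)) * qBinom M j)) M]
        congr 1
        · refine Finset.sum_congr rfl fun k hk => ?_
          have hkM : k < M := Finset.mem_range.1 hk
          have hx : (k + 1).choose 2 + (M - k) * t =
              t + ((k + 1).choose 2 + (M - (k + 1)) * t) := by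
            rw [show M - k = (M - (k + 1)) + 1 by omega]; ring
          rw [hx, show (algebraMap (Polynomial ℤ) F)
            (X ^ (t + ((k + 1).choose 2 + (M - (k + 1)) * t)))
            = φ (X ^ t) * φ (X ^ ((k + 1).choose 2 + (M - (k + 1)) * t)) from by
              rw [← map_mul, ← pow_add]]
          ring
        · rw [qBinom_zero_right, qBinom_zero_right]
          have hx : Nat.choose 0 2 + (M + 1 - 0) * t =
              t + (Nat.choose 0 2 + (M - 0) * t) := by
            simp only [Nat.sub_zero]; ring
          rw [hx, show (algebraMap (Polynomial ℤ) F)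
            (X ^ (t + (Nat.choose 0 2 + (M - 0) * t)))
            = φ (X ^ t) * φ (X ^ (Nat.choose 0 2 + (M - 0) * t)) from by
              rw [← map_mul, ← pow_add]]
          ring
      have second : ∑ k ∈ Finset.range (M + 1),
          φ (X ^ M) * ((-1 : F) ^ k * φ (X ^ (k.choose 2 + (M - k) * t)) * qBinom M k)
          = φ (X ^ M) * ∑ j ∈ Finset.range (M + 1),
              (-1 : F) ^ j * φ (X ^ (j.choose 2 + (M - j) * t)) * qBinom M j :=
        (Finset.mul_sum _ _ _).symm
      rw [sub_mul, ← first, ← second]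
      ring
    rw [key, ih, Finset.prod_range_succ, mul_comm]

lemma sum_aux : ∀ N : ℕ, 1 ≤ N →
    3 * N + ∑ i ∈ Finset.range (N - 1), i = (N + 2).choose 2 := by
  intro N
  induction N with
  | zero => omega
  | succ n ih =>
    intro _
    rcases Nat.eq_zero_or_pos n with h | h
    · subst h; decide
    · have hih := ih h
      have hs : ∑ i ∈ Finset.range (n + 1 - 1), i
          = (∑ i ∈ Finset.range (n - 1), i) + (n - 1) := by
        rw [show n + 1 - 1 = (n - 1) + 1 by omega, Finset.sum_range_succ]
      have hc : (n + 1 + 2).choose 2 = (n + 2) + (n + 2).choose 2 := by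
        rw [show n + 1 + 2 = (n + 2) + 1 by ring, Nat.choose_succ_succ,
          Nat.choose_one_right]
      omega

lemma poly_id (N : ℕ) (hN : 1 ≤ N) :
    (X : Polynomial ℤ) ^ (3 * N) * ∏ i ∈ Finset.range (N - 1), ((X : Polynomial ℤ) ^ N - X ^ i)
    = (-1) ^ (N + 1) * (X ^ ((N + 2).choose 2) * ∏ j ∈ Finset.Icc 2 N, (1 - X ^ j)) := by
  have h1 : ∏ i ∈ Finset.range (N - 1), ((X : Polynomial ℤ) ^ N - X ^ i)
      = ∏ i ∈ Finset.range (N - 1), ((-1) * (X ^ i * (1 - X ^ (N - i)))) := by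
    refine Finset.prod_congr rfl fun i hi => ?_
    have hiN : i ≤ N := by
      have := Finset.mem_range.1 hi; omega
    rw [mul_sub, mul_one, ← pow_add, show i + (N - i) = N by omega]; ring
  rw [h1, Finset.prod_mul_distrib, Finset.prod_mul_distrib, Finset.prod_const,
    Finset.prod_pow_eq_pow_sum]
  have h2 : ∏ i ∈ Finset.range (N - 1), (1 - (X : Polynomial ℤ) ^ (N - i))
      = ∏ j ∈ Finset.Icc 2 N, (1 - X ^ j) := by
    refine Finset.prod_nbij' (fun i => N - i) (fun j => N - j) ?_ ?_ ?_ ?_ ?_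
    · intro i hi; have := Finset.mem_range.1 hi; simp only [Finset.mem_Icc]; omega
    · intro j hj; simp only [Finset.mem_Icc] at hj; simp only [Finset.mem_range]; omega
    · intro i hi; have := Finset.mem_range.1 hi; show N - (N - i) = i; omega
    · intro j hj; simp only [Finset.mem_Icc] at hj; show N - (N - j) = j; omega
    · intro i hi; rfl
  rw [h2]
  have h3 : 3 * N + ∑ i ∈ Finset.range (N - 1), i = (N + 2).choose 2 := sum_aux N hN
  have h4 : ((-1 : Polynomial ℤ)) ^ (N - 1) = (-1) ^ (N + 1) := by
    rw [show N + 1 = (N - 1) + 2 by omega, pow_add]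
    simp
  rw [Finset.card_range, h4, ← h3,
    show (X : Polynomial ℤ) ^ (3 * N + ∑ i ∈ Finset.range (N - 1), i)
      = X ^ (3 * N) * X ^ (∑ i ∈ Finset.range (N - 1), i) from pow_add X _ _]
  ring

/-- `∑_{n=1}^{N} (−1)^{N−n} q^{N + n + nN + binom(N−n+1,2)} [N−1 choose n−1]_q
      = (−1)^{N+1} q^{binom(N+2,2)} ∏_{j=2}^{N} (1 − q^j)`. -/
theorem single_sum_identity (N : ℕ) (hN : 1 ≤ N) :
    ∑ n ∈ Finset.Icc 1 N,
      (-1 : FractionRing (Polynomial ℤ)) ^ (N - n) *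
        algebraMap (Polynomial ℤ) (FractionRing (Polynomial ℤ))
          (X ^ (N + n + n * N + (N - n + 1).choose 2)) *
        qBinom (N - 1) (n - 1) =
    (-1 : FractionRing (Polynomial ℤ)) ^ (N + 1) *
      algebraMap (Polynomial ℤ) (FractionRing (Polynomial ℤ))
        (X ^ ((N + 2).choose 2) * ∏ j ∈ Finset.Icc 2 N, (1 - X ^ j)) := by
  have reindex : ∑ n ∈ Finset.Icc 1 N,
      (-1 : F) ^ (N - n) * φ (X ^ (N + n + n * N + (N - n + 1).choose 2)) *
        qBinom (N - 1) (n - 1)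
      = ∑ j ∈ Finset.range N, φ (X ^ (3 * N)) *
          ((-1 : F) ^ j * φ (X ^ (j.choose 2 + (N - 1 - j) * N)) * qBinom (N - 1) j) := by
    refine Finset.sum_nbij' (fun n => N - n) (fun j => N - j) ?_ ?_ ?_ ?_ ?_
    · intro n hn; simp only [Finset.mem_Icc] at hn; simp only [Finset.mem_range]; omega
    · intro j hj; simp only [Finset.mem_range] at hj; simp only [Finset.mem_Icc]; omega
    · intro n hn; simp only [Finset.mem_Icc] at hn; show N - (N - n) = n; omega
    · intro j hj; simp only [Finset.mem_range] at hj; show N - (N - j) = j; omega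
    · intro n hn
      simp only [Finset.mem_Icc] at hn
      obtain ⟨b, rfl⟩ : ∃ b, n = b + 1 := ⟨n - 1, by omega⟩
      obtain ⟨m, rfl⟩ : ∃ m, N = b + 1 + m := ⟨N - (b + 1), by omega⟩
      beta_reduce
      have e1 : b + 1 + m - (b + 1) = m := by omega
      have e2 : b + 1 + m - 1 = b + m := by omega
      have e4 : b + 1 - 1 = b := by omega
      rw [e1, e2, e4]
      have e3 : b + m - m = b := by omega
      rw [← qBinom_symm (show m ≤ b + m by omega), e3]
      have hchm : (m + 1).choose 2 = m + m.choose 2 := by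
        rw [Nat.choose_succ_succ, Nat.choose_one_right]
      have hexp : (b + 1 + m) + (b + 1) + (b + 1) * (b + 1 + m) + (m + 1).choose 2
          = 3 * (b + 1 + m) + (m.choose 2 + b * (b + 1 + m)) := by
        rw [hchm]; ring
      rw [hexp, show (algebraMap (Polynomial ℤ) F)
        (X ^ (3 * (b + 1 + m) + (m.choose 2 + b * (b + 1 + m))))
        = φ (X ^ (3 * (b + 1 + m))) * φ (X ^ (m.choose 2 + b * (b + 1 + m))) from by
          rw [← map_mul, ← pow_add]]
      ring
  rw [reindex, ← Finset.mul_sum]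
  have hqbt := qbinom_theorem N (N - 1)
  rw [show N - 1 + 1 = N from by omega] at hqbt
  rw [hqbt]
  rw [Finset.prod_congr rfl (fun i _ => (map_sub (algebraMap (Polynomial ℤ) F)
    (X ^ N) (X ^ i)).symm), ← map_prod, ← map_mul]
  have hr : (-1 : F) ^ (N + 1) *
      φ (X ^ ((N + 2).choose 2) * ∏ j ∈ Finset.Icc 2 N, (1 - X ^ j))
      = φ ((-1) ^ (N + 1) *
          (X ^ ((N + 2).choose 2) * ∏ j ∈ Finset.Icc 2 N, (1 - X ^ j))) := by
    simp only [map_mul, map_pow, map_neg, map_one]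
  rw [hr]
  exact congrArg (algebraMap (Polynomial ℤ) F) (poly_id N hN)
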